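/- Let L > 0, let a : ℝ → ℝ be an L-periodic continuous function with magnetic flux α = (1/(2π))∫₀^L a(x)dx, and let k(α) be defined by: k(α) = 1/|sin(2πα)| if α mod 1 ∈ (0,1/4) ∪ (3/4,1), and k(α) = 1 if α mod 1 ∈ [1/4,3/4]. Suppose α ∉ ℤ. Then for every L-periodic function u ∈ H¹ one has ‖u‖_∞² ≤ k(α) · (∫₀^L |i u'(x) − a(x)u(x)|² dx)^{1/2} · (∫₀^L |u(x)|² dx)^{1/2}. -/

import Mathlib

open MeasureTheory Real Filter

/-- The constant `k(α)` from (K1): `1/|sin(2πα)|` when `α mod 1 ∈ (0,1/4)∪(3/4,1)`,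
and `1` when `α mod 1 ∈ [1/4,3/4]`. -/
noncomputable def kConst (α : ℝ) : ℝ :=
  if 1/4 ≤ Int.fract α ∧ Int.fract α ≤ 3/4 then 1
  else 1 / |Real.sin (2 * Real.pi * α)|

/-- `F(b,α) = b^{5/3} Σ_{k∈ℤ} (|k+α|³+b)^{-2}`. -/
noncomputable def Fsum (α b : ℝ) : ℝ :=
  b ^ ((5:ℝ)/3) * ∑' k : ℤ, ((|(k : ℝ) + α| ^ 3 + b) ^ 2)⁻¹

/-- `sup_{b ≥ 0} F(b,α)`. -/
noncomputable def supF (α : ℝ) : ℝ := ⨆ b : {x : ℝ // 0 ≤ x}, Fsum α b.1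

/-- The constant `K₂(α)`. -/
noncomputable def K2 (α : ℝ) : ℝ :=
  5 / (3 * Real.sqrt 3 * Real.pi) * (supF α) ^ 2

/-- `K(α) = min(K₁(α), K₂(α))` with `K₁(α) = k(α)²`. -/
noncomputable def Kmin (α : ℝ) : ℝ := min ((kConst α) ^ 2) (K2 α)

section AuxiliaryLemmas

open intervalIntegral Complex

lemma amgm_half {lam : ℝ} (hlam : 0 < lam) (X Y : ℝ) :
    X * Y ≤ lam / 2 * X ^ 2 + 1 / (2 * lam) * Y ^ 2 := by
  have h2 : 2 * lam * (X * Y) ≤ lam ^ 2 * X ^ 2 + Y ^ 2 := by nlinarith [sq_nonneg (lam * X - Y)]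
  have h3 : X * Y ≤ (lam ^ 2 * X ^ 2 + Y ^ 2) / (2 * lam) := by
    rw [le_div_iff₀ (by positivity)]; nlinarith
  calc X * Y ≤ (lam ^ 2 * X ^ 2 + Y ^ 2) / (2 * lam) := h3
    _ = lam / 2 * X ^ 2 + 1 / (2 * lam) * Y ^ 2 := by field_simp

lemma core_bound (L τ lam β : ℝ) (hL : 0 < L) (hτ : 0 < τ) (hlam : 0 < lam)
    (v v' : ℝ → ℂ) (hv : ∀ t, HasDerivAt v (v' t) t) (hv'c : Continuous v')
    (hqp : ∀ t, v (t + L) = Complex.exp (β * Complex.I) * v t) :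
    ‖v 0‖ ≤ lam / 2 * ((∫ t in (0:ℝ)..L, ‖v' t‖ ^ 2) + τ ^ 2 * ∫ t in (0:ℝ)..L, ‖v t‖ ^ 2)
      + 1 / (2 * lam) * ((1 - Real.exp (-(τ * L)) ^ 2) /
          (2 * τ * (1 - 2 * Real.exp (-(τ * L)) * Real.cos β + Real.exp (-(τ * L)) ^ 2))) := by
  have hvc : Continuous v := by
    rw [continuous_iff_continuousAt]; exact fun t => (hv t).continuousAt
  set q : ℝ := Real.exp (-(τ * L)) with hqdef
  have hq0 : 0 < q := Real.exp_pos _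
  have hq1 : q < 1 := by
    rw [hqdef]
    exact Real.exp_lt_one_iff.mpr (by nlinarith)
  set c : ℝ := Real.cos β with hcdef
  have hc1 : c ≤ 1 := Real.cos_le_one β
  set d : ℝ := 1 - 2 * q * c + q ^ 2 with hddef
  have hd : 0 < d := by nlinarith [sq_nonneg (1 - q)]
  set K : ℝ := (1 - q ^ 2) / (2 * τ * d) with hKdef
  have hK : 0 < K := div_pos (by nlinarith) (by positivity)
  set E : ℂ := Complex.exp (↑β * Complex.I) with hEdef
  set w : ℂ := star E with hwdef
  have hEw : E * w = 1 := by
    rw [hwdef, hEdef, Complex.star_def, ← Complex.exp_conj, ← Complex.exp_add]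
    simp [Complex.conj_I]
  have hwabs : ‖w‖ = 1 := by
    rw [hwdef, Complex.star_def, Complex.norm_conj, hEdef]
    exact Complex.norm_exp_ofReal_mul_I β
  have hw0 : w ≠ 0 := by
    intro h; rw [h] at hwabs; simp at hwabs
  have hwq : (w - (q : ℂ)) ≠ 0 := by
    intro h
    have h2 := congrArg (‖·‖) (sub_eq_zero.mp h)
    rw [hwabs, Complex.norm_real, Real.norm_eq_abs, abs_of_pos hq0] at h2
    linarith
  have h1qw : ((1 : ℂ) - (q : ℂ) * w) ≠ 0 := by
    intro h
    have h1 : (q : ℂ) * w = 1 := by linear_combination -h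
    have h2 := congrArg (‖·‖) h1
    rw [norm_mul, hwabs, Complex.norm_real, Real.norm_eq_abs, abs_of_pos hq0, mul_one, norm_one] at h2
    linarith
  have hτC : (τ : ℂ) ≠ 0 := Complex.ofReal_ne_zero.mpr hτ.ne'
  have hdne : (d : ℂ) ≠ 0 := Complex.ofReal_ne_zero.mpr hd.ne'
  set A : ℂ := 1 / (2 * (τ : ℂ) * (1 - (q : ℂ) * w)) with hAdef
  set B : ℂ := 1 / (2 * (τ : ℂ) * (w - (q : ℂ))) with hBdef
  set G : ℝ → ℂ := fun t => A * (Real.exp (-(τ * t)) : ℂ) + B * (Real.exp (-(τ * (L - t))) : ℂ)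
    with hGdef
  set Gd : ℝ → ℂ := fun t =>
    (τ : ℂ) * (B * (Real.exp (-(τ * (L - t))) : ℂ) - A * (Real.exp (-(τ * t)) : ℂ)) with hGddef
  have hexp1 : ∀ t : ℝ, HasDerivAt (fun t : ℝ => Real.exp (-(τ * t)))
      (-τ * Real.exp (-(τ * t))) t := by
    intro t
    have h := (((hasDerivAt_id t).const_mul τ).neg).exp
    simpa [mul_comm] using h
  have hexp2 : ∀ t : ℝ, HasDerivAt (fun t : ℝ => Real.exp (-(τ * (L - t))))
      (τ * Real.exp (-(τ * (L - t)))) t := by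
    intro t
    have h := ((((hasDerivAt_id t).const_sub L).const_mul τ).neg).exp
    simpa [mul_comm] using h
  have hGderiv : ∀ t, HasDerivAt G (Gd t) t := by
    intro t
    have h := (((hexp1 t).ofReal_comp).const_mul A).add (((hexp2 t).ofReal_comp).const_mul B)
    refine h.congr_deriv ?_
    rw [hGddef]; push_cast; ring
  have hGdderiv : ∀ t, HasDerivAt Gd ((τ : ℂ) ^ 2 * G t) t := by
    intro t
    have h := ((((hexp2 t).ofReal_comp).const_mul B).sub
      (((hexp1 t).ofReal_comp).const_mul A)).const_mul (τ : ℂ)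
    refine h.congr_deriv ?_
    rw [hGdef]; push_cast; ring
  have hGc : Continuous G := by
    rw [continuous_iff_continuousAt]; exact fun t => (hGderiv t).continuousAt
  have hGdc : Continuous Gd := by
    rw [continuous_iff_continuousAt]; exact fun t => (hGdderiv t).continuousAt
  -- boundary values
  have hvalL1 : (Real.exp (-(τ * (L - L))) : ℂ) = 1 := by norm_num
  have hvalq : (Real.exp (-(τ * L)) : ℂ) = (q : ℂ) := by rw [hqdef]
  have hvalL0 : (Real.exp (-(τ * (L - 0))) : ℂ) = (q : ℂ) := by rw [hqdef]; norm_num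
  have hval0 : (Real.exp (-(τ * 0)) : ℂ) = 1 := by norm_num
  have hGdL : Gd L = (τ : ℂ) * (B - A * (q : ℂ)) := by
    rw [hGddef]; simp only [hvalL1, hvalq, mul_one]
  have hGd0 : Gd 0 = (τ : ℂ) * (B * (q : ℂ) - A) := by
    rw [hGddef]; simp only [hvalL0, hval0, mul_one]
  have hGLval : G L = A * (q : ℂ) + B := by
    rw [hGdef]; simp only [hvalL1, hvalq, mul_one]
  have hG0val : G 0 = A + B * (q : ℂ) := by
    rw [hGdef]; simp only [hvalL0, hval0, mul_one]
  -- algebraic identities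
  have idJ : w * Gd L - Gd 0 = 1 := by
    rw [hGdL, hGd0, hAdef, hBdef]
    have h' : (1:ℂ) - w * q ≠ 0 := by rwa [mul_comm]
    field_simp; ring
  have hGL : G L = E * G 0 := by
    rw [hGLval, hG0val, hAdef, hBdef]; field_simp
    linear_combination ((q : ℂ) ^ 2 - 1) * hEw
  have hcE : E + w = 2 * (c : ℂ) := by
    rw [hwdef, Complex.star_def, Complex.add_conj, hEdef, Complex.exp_ofReal_mul_I_re, hcdef]
    push_cast; ring
  have hG0K : G 0 = ((K : ℝ) : ℂ) := by
    have hXY : ((1 : ℂ) - (q : ℂ) * w) * (w - (q : ℂ)) = (d : ℂ) * w := by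
      have hdC : (d : ℂ) = 1 - (q : ℂ) * (E + w) + (q : ℂ) ^ 2 := by
        rw [hcE, hddef]; push_cast; ring
      linear_combination (-w) * hdC + (q : ℂ) * hEw
    have e1 : A + B * (q : ℂ)
        = (w * (1 - (q : ℂ) ^ 2)) / (2 * (τ : ℂ) * ((1 - (q : ℂ) * w) * (w - (q : ℂ)))) := by
      rw [hAdef, hBdef]; field_simp; ring
    rw [hG0val, e1, hXY, hKdef]
    push_cast
    field_simp
  clear_value q c d K E w A B G Gd
  -- FTC for P
  have hPderiv : ∀ t ∈ Set.uIcc (0 : ℝ) L, HasDerivAt (fun s => star (v s) * Gd s)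
      (star (v' t) * Gd t + star (v t) * ((τ : ℂ) ^ 2 * G t)) t :=
    fun t _ => ((hv t).star).mul (hGdderiv t)
  have hPcont : Continuous fun t => star (v' t) * Gd t + star (v t) * ((τ : ℂ) ^ 2 * G t) :=
    ((hv'c.star).mul hGdc).add ((hvc.star).mul (continuous_const.mul hGc))
  have key1 : (∫ t in (0 : ℝ)..L, (star (v' t) * Gd t + star (v t) * ((τ : ℂ) ^ 2 * G t)))
      = star (v 0) := by
    rw [integral_eq_sub_of_hasDerivAt hPderiv (hPcont.intervalIntegrable _ _)]
    have hvL : v L = E * v 0 := by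
      have h := hqp 0; rwa [zero_add] at h
    rw [hvL, star_mul', ← hwdef]
    linear_combination (star (v 0)) * idJ
  -- value of the G-energy
  have hKval : (∫ t in (0 : ℝ)..L, (‖Gd t‖ ^ 2 + τ ^ 2 * ‖G t‖ ^ 2)) = K := by
    have hQderiv : ∀ t ∈ Set.uIcc (0 : ℝ) L, HasDerivAt (fun s => star (G s) * Gd s)
        (star (Gd t) * Gd t + star (G t) * ((τ : ℂ) ^ 2 * G t)) t :=
      fun t _ => ((hGderiv t).star).mul (hGdderiv t)
    have hQcont : Continuous fun t => star (Gd t) * Gd t + star (G t) * ((τ : ℂ) ^ 2 * G t) :=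
      ((hGdc.star).mul hGdc).add ((hGc.star).mul (continuous_const.mul hGc))
    have h1 := integral_eq_sub_of_hasDerivAt hQderiv (hQcont.intervalIntegrable _ _)
    have e1 : ∀ z : ℂ, star z * z = ((‖z‖ ^ 2 : ℝ) : ℂ) := by
      intro z
      rw [Complex.star_def, mul_comm, Complex.mul_conj, Complex.normSq_eq_norm_sq]
    have h2 : ∀ t, star (Gd t) * Gd t + star (G t) * ((τ : ℂ) ^ 2 * G t)
        = (((‖Gd t‖ ^ 2 + τ ^ 2 * ‖G t‖ ^ 2 : ℝ)) : ℂ) := by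
      intro t
      have : star (G t) * ((τ : ℂ) ^ 2 * G t) = (τ : ℂ) ^ 2 * (star (G t) * G t) := by ring
      rw [this, e1, e1]
      push_cast
      ring
    have h3 : (∫ t in (0 : ℝ)..L, (star (Gd t) * Gd t + star (G t) * ((τ : ℂ) ^ 2 * G t)))
        = (((∫ t in (0 : ℝ)..L, (‖Gd t‖ ^ 2 + τ ^ 2 * ‖G t‖ ^ 2) : ℝ)) : ℂ) := by
      rw [← intervalIntegral.integral_ofReal]
      exact intervalIntegral.integral_congr (fun t _ => h2 t)
    rw [h3] at h1
    have h4 : star (G L) * Gd L - star (G 0) * Gd 0 = ((K : ℝ) : ℂ) := by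
      rw [hGL, star_mul', ← hwdef, hG0K, Complex.star_def, Complex.conj_ofReal]
      linear_combination ((K : ℝ) : ℂ) * idJ
    rw [h4] at h1
    exact_mod_cast h1
  -- main estimate
  have hcont1 : Continuous fun t : ℝ => ‖v' t‖ ^ 2 + τ ^ 2 * ‖v t‖ ^ 2 :=
    ((hv'c.norm.pow 2)).add (continuous_const.mul (hvc.norm.pow 2))
  have hcont2 : Continuous fun t : ℝ => ‖Gd t‖ ^ 2 + τ ^ 2 * ‖G t‖ ^ 2 :=
    ((hGdc.norm.pow 2)).add (continuous_const.mul (hGc.norm.pow 2))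
  have step : ‖v 0‖ ≤ lam / 2 * (∫ t in (0 : ℝ)..L, (‖v' t‖ ^ 2 + τ ^ 2 * ‖v t‖ ^ 2))
      + 1 / (2 * lam) * K := by
    calc ‖v 0‖ = ‖star (v 0)‖ := (norm_star _).symm
      _ = ‖∫ t in (0 : ℝ)..L, (star (v' t) * Gd t + star (v t) * ((τ : ℂ) ^ 2 * G t))‖ := by
          rw [key1]
      _ ≤ ∫ t in (0 : ℝ)..L, ‖star (v' t) * Gd t + star (v t) * ((τ : ℂ) ^ 2 * G t)‖ :=
          intervalIntegral.norm_integral_le_integral_norm hL.le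
      _ ≤ ∫ t in (0 : ℝ)..L, (lam / 2 * (‖v' t‖ ^ 2 + τ ^ 2 * ‖v t‖ ^ 2)
            + 1 / (2 * lam) * (‖Gd t‖ ^ 2 + τ ^ 2 * ‖G t‖ ^ 2)) := by
          apply intervalIntegral.integral_mono_on hL.le
            (hPcont.norm.intervalIntegrable _ _)
            (((continuous_const.fun_mul hcont1).fun_add
              (continuous_const.fun_mul hcont2)).intervalIntegrable _ _)
          intro t _
          have b1 : ‖star (v' t) * Gd t + star (v t) * ((τ : ℂ) ^ 2 * G t)‖
              ≤ ‖v' t‖ * ‖Gd t‖ + (τ * ‖v t‖) * (τ * ‖G t‖) := by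
            have n1 : ‖star (v' t) * Gd t‖ = ‖v' t‖ * ‖Gd t‖ := by
              rw [norm_mul, norm_star]
            have n2 : ‖star (v t) * ((τ : ℂ) ^ 2 * G t)‖ = (τ * ‖v t‖) * (τ * ‖G t‖) := by
              rw [norm_mul, norm_star, norm_mul, norm_pow, Complex.norm_real,
                Real.norm_eq_abs, abs_of_pos hτ]
              ring
            calc ‖star (v' t) * Gd t + star (v t) * ((τ : ℂ) ^ 2 * G t)‖
                ≤ ‖star (v' t) * Gd t‖ + ‖star (v t) * ((τ : ℂ) ^ 2 * G t)‖ := norm_add_le _ _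
              _ = ‖v' t‖ * ‖Gd t‖ + (τ * ‖v t‖) * (τ * ‖G t‖) := by rw [n1, n2]
          have b2 := amgm_half hlam (‖v' t‖) (‖Gd t‖)
          have b3 := amgm_half hlam (τ * ‖v t‖) (τ * ‖G t‖)
          nlinarith [b1, b2, b3]
      _ = lam / 2 * (∫ t in (0 : ℝ)..L, (‖v' t‖ ^ 2 + τ ^ 2 * ‖v t‖ ^ 2))
            + 1 / (2 * lam) * K := by
          rw [intervalIntegral.integral_add
              ((continuous_const.fun_mul hcont1).intervalIntegrable _ _)
              ((continuous_const.fun_mul hcont2).intervalIntegrable _ _),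
            intervalIntegral.integral_const_mul, intervalIntegral.integral_const_mul, hKval]
  have hsplit : (∫ t in (0 : ℝ)..L, (‖v' t‖ ^ 2 + τ ^ 2 * ‖v t‖ ^ 2))
      = (∫ t in (0 : ℝ)..L, ‖v' t‖ ^ 2) + τ ^ 2 * ∫ t in (0 : ℝ)..L, ‖v t‖ ^ 2 := by
    rw [intervalIntegral.integral_add ((hv'c.norm.fun_pow 2).intervalIntegrable _ _)
        ((continuous_const.fun_mul (hvc.norm.fun_pow 2)).intervalIntegrable _ _),
      intervalIntegral.integral_const_mul]
  rw [hsplit] at step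
  exact step

lemma core_sq (L τ β : ℝ) (hL : 0 < L) (hτ : 0 < τ)
    (v v' : ℝ → ℂ) (hv : ∀ t, HasDerivAt v (v' t) t) (hv'c : Continuous v')
    (hqp : ∀ t, v (t + L) = Complex.exp (β * Complex.I) * v t) (x : ℝ) :
    ‖v x‖ ^ 2 ≤ ((∫ t in (0:ℝ)..L, ‖v' t‖ ^ 2) + τ ^ 2 * ∫ t in (0:ℝ)..L, ‖v t‖ ^ 2) *
      ((1 - Real.exp (-(τ * L)) ^ 2) /
        (2 * τ * (1 - 2 * Real.exp (-(τ * L)) * Real.cos β + Real.exp (-(τ * L)) ^ 2))) := by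
  have hvc : Continuous v := by
    rw [continuous_iff_continuousAt]; exact fun t => (hv t).continuousAt
  set E : ℂ := Complex.exp (β * Complex.I) with hEdef
  have hE1 : ‖E‖ = 1 := by
    rw [hEdef]; exact Complex.norm_exp_ofReal_mul_I β
  have hqp' : ∀ t, v' (t + L) = E * v' t := by
    intro t
    have h1 : HasDerivAt (fun s => v (s + L)) (v' (t + L)) t := by
      exact (hv (t + L)).comp_add_const t L
    have h3 : (fun s => v (s + L)) = fun s => E * v s := funext hqp
    rw [h3] at h1
    exact h1.unique ((hv t).const_mul E)
  have hpv : Function.Periodic (fun t => ‖v t‖ ^ 2) L := by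
    intro t; simp only [hqp t, norm_mul, hE1, one_mul]
  have hpv' : Function.Periodic (fun t => ‖v' t‖ ^ 2) L := by
    intro t; simp only [hqp' t, norm_mul, hE1, one_mul]
  -- translated integrals
  have i1 : (∫ t in (0:ℝ)..L, ‖v' (x + t)‖ ^ 2) = ∫ t in (0:ℝ)..L, ‖v' t‖ ^ 2 := by
    rw [intervalIntegral.integral_comp_add_left (fun t => ‖v' t‖ ^ 2) x]
    have h := hpv'.intervalIntegral_add_eq x 0
    simpa using h
  have i2 : (∫ t in (0:ℝ)..L, ‖v (x + t)‖ ^ 2) = ∫ t in (0:ℝ)..L, ‖v t‖ ^ 2 := by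
    rw [intervalIntegral.integral_comp_add_left (fun t => ‖v t‖ ^ 2) x]
    have h := hpv.intervalIntegral_add_eq x 0
    simpa using h
  set Dv : ℝ := ∫ t in (0:ℝ)..L, ‖v' t‖ ^ 2 with hDv
  set Bv : ℝ := ∫ t in (0:ℝ)..L, ‖v t‖ ^ 2 with hBv
  set q : ℝ := Real.exp (-(τ * L)) with hqdef
  have hq0 : 0 < q := Real.exp_pos _
  have hq1 : q < 1 := Real.exp_lt_one_iff.mpr (by nlinarith)
  have hc1 : Real.cos β ≤ 1 := Real.cos_le_one β
  set d : ℝ := 1 - 2 * q * Real.cos β + q ^ 2 with hddef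
  have hd : 0 < d := by nlinarith [sq_nonneg (1 - q)]
  set K : ℝ := (1 - q ^ 2) / (2 * τ * d) with hKdef
  have hK : 0 < K := div_pos (by nlinarith) (by positivity)
  have key : ∀ lam : ℝ, 0 < lam → ‖v x‖ ≤ lam / 2 * (Dv + τ ^ 2 * Bv) + 1 / (2 * lam) * K := by
    intro lam hlam
    have h := core_bound L τ lam β hL hτ hlam (fun t => v (x + t)) (fun t => v' (x + t))
      (fun t => (hv (x + t)).comp_const_add x t)
      (hv'c.comp (continuous_const.add continuous_id))
      (fun t => by
        have h := hqp (x + t)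
        calc v (x + (t + L)) = v ((x + t) + L) := by ring_nf
          _ = E * v (x + t) := h)
    simp only [add_zero] at h
    rw [i1, i2, ← hqdef, ← hddef, ← hKdef] at h
    exact h
  have hDv0 : 0 ≤ Dv := intervalIntegral.integral_nonneg hL.le (fun t _ => by positivity)
  have hBv0 : 0 ≤ Bv := intervalIntegral.integral_nonneg hL.le (fun t _ => by positivity)
  set Hv : ℝ := Dv + τ ^ 2 * Bv with hHvdef
  have hHv0 : 0 ≤ Hv := by positivity
  rcases eq_or_lt_of_le hHv0 with hHv | hHv
  · -- Hv = 0
    have hvx : ‖v x‖ ≤ 0 := by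
      have h : ∀ ε : ℝ, 0 < ε → ‖v x‖ ≤ 0 + ε := by
        intro ε hε
        have hlam : 0 < K / (2 * ε) := by positivity
        have h := key _ hlam
        rw [← hHv] at h
        calc ‖v x‖ ≤ K / (2 * ε) / 2 * 0 + 1 / (2 * (K / (2 * ε))) * K := h
          _ = 0 + ε := by
              rw [mul_zero, zero_add, zero_add]
              field_simp
      exact le_of_forall_pos_le_add h
    have : ‖v x‖ = 0 := le_antisymm hvx (norm_nonneg _)
    rw [this, ← hHv]
    simp
  · -- Hv > 0
    set sh : ℝ := Real.sqrt Hv with hsh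
    set sk : ℝ := Real.sqrt K with hsk
    have hsh0 : 0 < sh := Real.sqrt_pos.mpr hHv
    have hsk0 : 0 < sk := Real.sqrt_pos.mpr hK
    have hsh2 : sh ^ 2 = Hv := Real.sq_sqrt hHv.le
    have hsk2 : sk ^ 2 = K := Real.sq_sqrt hK.le
    have hlam : 0 < sk / sh := by positivity
    have h := key _ hlam
    have e1 : sk / sh / 2 * Hv + 1 / (2 * (sk / sh)) * K = sh * sk := by
      rw [← hsh2, ← hsk2]; field_simp; ring
    rw [e1] at h
    calc ‖v x‖ ^ 2 ≤ (sh * sk) ^ 2 := by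
          apply pow_le_pow_left₀ (norm_nonneg _) h
      _ = Hv * K := by rw [mul_pow, hsh2, hsk2]

lemma kConst_nonneg (α : ℝ) : 0 ≤ kConst α := by
  unfold kConst; split_ifs
  · norm_num
  · positivity

lemma ratio_le_kConst (α : ℝ) (hαZ : ∀ m : ℤ, α ≠ (m : ℝ)) {q : ℝ} (hq0 : 0 < q) (hq1 : q < 1) :
    (1 - q ^ 2) / (1 - 2 * q * Real.cos (2 * Real.pi * α) + q ^ 2) ≤ kConst α := by
  have hπ : (0:ℝ) < Real.pi := Real.pi_pos
  set c : ℝ := Real.cos (2 * Real.pi * α) with hcdef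
  set s : ℝ := Real.sin (2 * Real.pi * α) with hsdef
  have hsc : s ^ 2 + c ^ 2 = 1 := Real.sin_sq_add_cos_sq _
  have hc1 : c ≤ 1 := Real.cos_le_one _
  have hd : 0 < 1 - 2 * q * c + q ^ 2 := by nlinarith [sq_nonneg (1 - q)]
  set f : ℝ := Int.fract α with hfdef
  have hsplit : 2 * Real.pi * α = 2 * Real.pi * f + (⌊α⌋ : ℝ) * (2 * Real.pi) := by
    rw [hfdef, Int.fract]; push_cast; ring
  have hcf : c = Real.cos (2 * Real.pi * f) := by
    rw [hcdef, hsplit]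
    exact Real.cos_add_int_mul_two_pi _ _
  have hsf : s = Real.sin (2 * Real.pi * f) := by
    rw [hsdef, hsplit]
    exact Real.sin_add_int_mul_two_pi _ _
  have hf0 : 0 < f := by
    rcases lt_or_eq_of_le (Int.fract_nonneg α) with h | h
    · exact h
    · exfalso
      apply hαZ ⌊α⌋
      conv_lhs => rw [← Int.floor_add_fract α]
      rw [← h, add_zero]
  have hf1 : f < 1 := Int.fract_lt_one α
  unfold kConst
  rw [← hfdef]
  split_ifs with hbr
  · have hc0 : c ≤ 0 := by
      rw [hcf]
      apply Real.cos_nonpos_of_pi_div_two_le_of_le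
      · nlinarith [hbr.1]
      · nlinarith [hbr.2]
    rw [div_le_one hd]
    nlinarith
  · have hs0 : s ≠ 0 := by
      rcases not_and_or.mp hbr with h | h
      · push_neg at h
        have : 0 < Real.sin (2 * Real.pi * f) := by
          apply Real.sin_pos_of_pos_of_lt_pi (by positivity)
          nlinarith
        rw [hsf]; exact this.ne'
      · push_neg at h
        have h2 : Real.sin (2 * Real.pi * f) < 0 := by
          have e : 2 * Real.pi * f = (2 * Real.pi * f - 2 * Real.pi) + (1 : ℤ) * (2 * Real.pi) := by
            push_cast; ring
          rw [e, Real.sin_add_int_mul_two_pi]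
          apply Real.sin_neg_of_neg_of_neg_pi_lt
          · nlinarith
          · nlinarith
        rw [hsf]; exact h2.ne
    have habs : 0 < |s| := abs_pos.mpr hs0
    rw [div_le_div_iff₀ hd habs]
    nlinarith [sq_nonneg ((1 + |s|) * q - c), abs_nonneg s, _root_.sq_abs s, le_abs_self s,
      neg_abs_le s, abs_le_one_iff_mul_self_le_one.mpr (by nlinarith : s * s ≤ 1)]

end AuxiliaryLemmas

section MainTheorem

open intervalIntegral

set_option maxHeartbeats 2000000 in
/-- 1D magnetic interpolation inequality with sharp constant `k(α)`. -/
theorem magnetic_interpolation_inequality_1d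
    (L : ℝ) (hL : 0 < L)
    (a : ℝ → ℝ) (ha : Continuous a) (haP : Function.Periodic a L)
    (α : ℝ) (hα : α = (1 / (2 * Real.pi)) * ∫ x in (0:ℝ)..L, a x)
    (hαZ : ∀ m : ℤ, α ≠ (m : ℝ))
    (u : ℝ → ℂ) (hu : ContDiff ℝ 1 u) (huP : Function.Periodic u L) :
    (⨆ x : Set.Icc (0:ℝ) L, ‖u x.1‖) ^ 2 ≤
      kConst α *
        Real.sqrt (∫ x in (0:ℝ)..L, ‖Complex.I * deriv u x - (a x : ℂ) * u x‖ ^ 2) *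
        Real.sqrt (∫ x in (0:ℝ)..L, ‖u x‖ ^ 2) := by
  have hπ : (0:ℝ) < Real.pi := Real.pi_pos
  set β : ℝ := 2 * Real.pi * α with hβdef
  -- basic facts about u
  have huc : Continuous u := hu.continuous
  have hu' : ∀ t, HasDerivAt u (deriv u t) t :=
    fun t => ((hu.differentiable one_ne_zero) t).hasDerivAt
  have hu'c : Continuous (deriv u) := hu.continuous_deriv le_rfl
  -- the gauge phase
  set ψ : ℝ → ℝ := fun t => ∫ s in (0:ℝ)..t, a s with hψdef
  have hψ : ∀ t, HasDerivAt ψ (a t) t := fun t => (ha.integral_hasStrictDerivAt 0 t).hasDerivAt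
  have hψc : Continuous ψ := by
    rw [continuous_iff_continuousAt]; exact fun t => (hψ t).continuousAt
  have hflux : ∀ t, ψ (t + L) = ψ t + β := by
    intro t
    have h1 : (∫ s in (0:ℝ)..t, a s) + (∫ s in t..(t+L), a s) = ∫ s in (0:ℝ)..(t+L), a s :=
      intervalIntegral.integral_add_adjacent_intervals (ha.intervalIntegrable _ _)
        (ha.intervalIntegrable _ _)
    have h2 : (∫ s in t..(t+L), a s) = ∫ s in (0:ℝ)..(0+L), a s :=
      haP.intervalIntegral_add_eq t 0
    have h3 : (∫ s in (0:ℝ)..L, a s) = β := by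
      rw [hβdef, hα]; field_simp
    rw [zero_add] at h2
    show (∫ s in (0:ℝ)..(t+L), a s) = (∫ s in (0:ℝ)..t, a s) + β
    rw [← h1, h2, h3]
  -- gauge transform
  set v : ℝ → ℂ := fun t => Complex.exp ((ψ t : ℂ) * Complex.I) * u t with hvdef
  set v' : ℝ → ℂ := fun t =>
    Complex.exp ((ψ t : ℂ) * Complex.I) * (deriv u t + (a t : ℂ) * Complex.I * u t) with hv'def
  have hvD : ∀ t, HasDerivAt v (v' t) t := by
    intro t
    have h1 : HasDerivAt (fun t : ℝ => ((ψ t : ℂ) * Complex.I)) ((a t : ℂ) * Complex.I) t :=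
      ((hψ t).ofReal_comp).mul_const Complex.I
    have h3 := (h1.cexp).mul (hu' t)
    refine h3.congr_deriv ?_
    rw [hv'def]
    ring
  have hv'c : Continuous v' := by
    apply Continuous.mul
    · exact ((Complex.continuous_ofReal.comp hψc).mul continuous_const).cexp
    · exact hu'c.add (((Complex.continuous_ofReal.comp ha).mul continuous_const).mul huc)
  have hvqp : ∀ t, v (t + L) = Complex.exp ((β : ℂ) * Complex.I) * v t := by
    intro t
    rw [hvdef]
    simp only
    rw [hflux t, huP t]
    push_cast
    rw [add_mul, Complex.exp_add]
    ring
  -- norms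
  have hexp1 : ∀ r : ℝ, ‖Complex.exp ((r : ℂ) * Complex.I)‖ = 1 := by
    intro r
    exact Complex.norm_exp_ofReal_mul_I r
  have hnv : ∀ t, ‖v t‖ = ‖u t‖ := by
    intro t
    rw [hvdef]; simp only [norm_mul, hexp1, one_mul]
  have hnv' : ∀ t, ‖v' t‖ = ‖Complex.I * deriv u t - (a t : ℂ) * u t‖ := by
    intro t
    have hI : Complex.I * Complex.I = -1 := Complex.I_mul_I
    have e : Complex.I * deriv u t - (a t : ℂ) * u t
        = Complex.I * (deriv u t + (a t : ℂ) * Complex.I * u t) := by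
      linear_combination (-((a t : ℂ) * u t)) * hI
    rw [hv'def]; simp only [norm_mul, hexp1, one_mul]
    rw [e, norm_mul, Complex.norm_I, one_mul]
  clear_value β ψ v v'
  -- the two integrals
  set Dsq : ℝ := ∫ x in (0:ℝ)..L, ‖Complex.I * deriv u x - (a x : ℂ) * u x‖ ^ 2 with hDsqdef
  set Bsq : ℝ := ∫ x in (0:ℝ)..L, ‖u x‖ ^ 2 with hBsqdef
  have hDv : (∫ t in (0:ℝ)..L, ‖v' t‖ ^ 2) = Dsq := by
    rw [hDsqdef]
    apply intervalIntegral.integral_congr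
    intro t _
    show ‖v' t‖ ^ 2 = ‖Complex.I * deriv u t - (a t : ℂ) * u t‖ ^ 2
    rw [hnv' t]
  have hBv : (∫ t in (0:ℝ)..L, ‖v t‖ ^ 2) = Bsq := by
    rw [hBsqdef]
    apply intervalIntegral.integral_congr
    intro t _
    show ‖v t‖ ^ 2 = ‖u t‖ ^ 2
    rw [hnv t]
  have hDsq0 : 0 ≤ Dsq := by
    rw [hDsqdef]
    exact intervalIntegral.integral_nonneg hL.le (fun t _ => by positivity)
  have hBsq0 : 0 ≤ Bsq := by
    rw [hBsqdef]
    exact intervalIntegral.integral_nonneg hL.le (fun t _ => by positivity)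
  clear_value Dsq Bsq
  -- master bound from core_sq
  have master : ∀ x : ℝ, ∀ τ : ℝ, 0 < τ → ‖u x‖ ^ 2 ≤ (Dsq + τ ^ 2 * Bsq) *
      ((1 - Real.exp (-(τ * L)) ^ 2) /
        (2 * τ * (1 - 2 * Real.exp (-(τ * L)) * Real.cos β + Real.exp (-(τ * L)) ^ 2))) := by
    intro x τ hτ
    have h := core_sq L τ β hL hτ v v' hvD hv'c hvqp x
    rw [hDv, hBv, hnv x] at h
    exact h
  -- the target RHS
  set kR : ℝ := kConst α * Real.sqrt Dsq * Real.sqrt Bsq with hkRdef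
  have hkR0 : 0 ≤ kR := by
    have := kConst_nonneg α
    rw [hkRdef]; positivity
  clear_value kR
  -- pointwise bound
  have hpt : ∀ x : ℝ, ‖u x‖ ^ 2 ≤ kR := by
    intro x
    have hcβ0 : Real.cos β ≤ 1 := Real.cos_le_one β
    have hcβ1 : Real.cos β < 1 := by
      rcases lt_or_eq_of_le hcβ0 with h | h
      · exact h
      · exfalso
        rcases (Real.cos_eq_one_iff β).mp h with ⟨n, hn⟩
        apply hαZ n
        rw [hβdef] at hn
        have h2 : 2 * Real.pi * (n:ℝ) = 2 * Real.pi * α := by linarith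
        exact (mul_left_cancel₀ (by positivity) h2).symm
    rcases eq_or_lt_of_le hDsq0 with hD | hD
    · rcases eq_or_lt_of_le hBsq0 with hB | hB
      · -- both zero : any τ
        have h := master x 1 one_pos
        rw [← hD, ← hB] at h
        exact le_trans h (le_trans (le_of_eq (by ring)) hkR0)
      · -- Dsq = 0, Bsq > 0 : τ → 0
        have hε : ∀ ε : ℝ, 0 < ε → ‖u x‖ ^ 2 ≤ 0 + ε := by
          intro ε hε
          have hcpos : 0 < 1 - Real.cos β := by linarith
          set τ : ℝ := min (1 / L) (ε * (1 - Real.cos β) / Bsq) with hτdef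
          have hτ0 : 0 < τ := lt_min (by positivity) (by positivity)
          have hτleL : τ ≤ 1 / L := min_le_left _ _
          have hτle : τ ≤ ε * (1 - Real.cos β) / Bsq := min_le_right _ _
          clear_value τ
          have h := master x τ hτ0
          rw [← hD] at h
          set q : ℝ := Real.exp (-(τ * L)) with hqdef
          clear_value q
          have hq0 : 0 < q := by rw [hqdef]; positivity
          have hq1 : q < 1 := by
            rw [hqdef]; exact Real.exp_lt_one_iff.mpr (by nlinarith)
          have hq3 : (1:ℝ)/3 ≤ q := by
            rw [hqdef]
            have h3 : τ * L ≤ 1 := by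
              calc τ * L ≤ (1/L) * L := by nlinarith
                _ = 1 := by field_simp
            calc (1:ℝ)/3 ≤ Real.exp (-1) := by
                  rw [Real.exp_neg, ← one_div]
                  have h9 : Real.exp 1 ≤ 3 := by
                    have := Real.exp_one_lt_d9
                    linarith
                  exact one_div_le_one_div_of_le (Real.exp_pos 1) h9
              _ ≤ Real.exp (-(τ * L)) := Real.exp_le_exp.mpr (by linarith)
          set d' : ℝ := 1 - 2 * q * Real.cos β + q ^ 2 with hd'def
          clear_value d'
          have hd'0 : 0 < d' := by rw [hd'def]; nlinarith [sq_nonneg (1 - q)]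
          have hd'lb : (2:ℝ)/3 * (1 - Real.cos β) ≤ d' := by
            rw [hd'def]; nlinarith [sq_nonneg (1 - q)]
          have hfrac : (1 - q ^ 2) / (2 * τ * d')
              ≤ 1 / (2 * τ * ((2:ℝ)/3 * (1 - Real.cos β))) := by
            apply div_le_div₀ (by norm_num) (by nlinarith) (by positivity)
            nlinarith
          calc ‖u x‖ ^ 2 ≤ (0 + τ ^ 2 * Bsq) * ((1 - q ^ 2) / (2 * τ * d')) := h
            _ = τ ^ 2 * Bsq * ((1 - q ^ 2) / (2 * τ * d')) := by rw [zero_add]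
            _ ≤ τ ^ 2 * Bsq * (1 / (2 * τ * ((2:ℝ)/3 * (1 - Real.cos β)))) := by
                apply mul_le_mul_of_nonneg_left hfrac (by positivity)
            _ = τ * (Bsq * 3 / (4 * (1 - Real.cos β))) := by
                field_simp
                ring
            _ ≤ (ε * (1 - Real.cos β) / Bsq) * (Bsq * 3 / (4 * (1 - Real.cos β))) := by
                apply mul_le_mul_of_nonneg_right hτle (by positivity)
            _ = 3/4 * ε := by
                field_simp
            _ ≤ 0 + ε := by linarith
        have h0 := le_of_forall_pos_le_add hε
        calc ‖u x‖ ^ 2 ≤ 0 := h0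
          _ ≤ kR := hkR0
    · rcases eq_or_lt_of_le hBsq0 with hB | hB
      · -- Bsq = 0, Dsq > 0 : τ → ∞
        have hε : ∀ ε : ℝ, 0 < ε → ‖u x‖ ^ 2 ≤ 0 + ε := by
          intro ε hε
          set τ : ℝ := max (1 / L) (2 * Dsq / ε) with hτdef
          have hτ0 : 0 < τ := lt_of_lt_of_le (by positivity) (le_max_left _ _)
          have hτgeL : 1 / L ≤ τ := le_max_left _ _
          have hτge : 2 * Dsq / ε ≤ τ := le_max_right _ _
          clear_value τ
          have h := master x τ hτ0
          rw [← hB] at h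
          set q : ℝ := Real.exp (-(τ * L)) with hqdef
          clear_value q
          have hq0 : 0 < q := by rw [hqdef]; positivity
          have hq1 : q < 1 := by
            rw [hqdef]; exact Real.exp_lt_one_iff.mpr (by nlinarith)
          have hqhalf : q ≤ 1/2 := by
            rw [hqdef]
            have h3 : (1:ℝ) ≤ τ * L := by
              calc (1:ℝ) = (1/L) * L := by field_simp
                _ ≤ τ * L := by nlinarith
            calc Real.exp (-(τ * L)) ≤ Real.exp (-1) := Real.exp_le_exp.mpr (by linarith)
              _ ≤ 1/2 := by
                  rw [Real.exp_neg, ← one_div]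
                  have h9 : (2:ℝ) ≤ Real.exp 1 := by
                    have := Real.add_one_le_exp (1:ℝ)
                    linarith
                  exact one_div_le_one_div_of_le (by norm_num) h9
          set d' : ℝ := 1 - 2 * q * Real.cos β + q ^ 2 with hd'def
          clear_value d'
          have hd'0 : 0 < d' := by rw [hd'def]; nlinarith [sq_nonneg (1 - q)]
          have hd'lb : (1:ℝ)/4 ≤ d' := by
            rw [hd'def]; nlinarith [Real.neg_one_le_cos β]
          have hfrac : (1 - q ^ 2) / (2 * τ * d') ≤ 1 / (2 * τ * ((1:ℝ)/4)) := by
            apply div_le_div₀ (by norm_num) (by nlinarith) (by positivity)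
            nlinarith
          calc ‖u x‖ ^ 2 ≤ (Dsq + τ ^ 2 * 0) * ((1 - q ^ 2) / (2 * τ * d')) := h
            _ = Dsq * ((1 - q ^ 2) / (2 * τ * d')) := by ring_nf
            _ ≤ Dsq * (1 / (2 * τ * ((1:ℝ)/4))) := by
                apply mul_le_mul_of_nonneg_left hfrac hDsq0
            _ = 2 * Dsq / τ := by field_simp; ring
            _ ≤ ε := by
                rw [div_le_iff₀ hτ0]
                have e2 : 2 * Dsq / ε * ε = 2 * Dsq := by field_simp
                nlinarith [mul_le_mul_of_nonneg_right hτge hε.le, e2]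
            _ ≤ 0 + ε := by linarith
        have h0 := le_of_forall_pos_le_add hε
        calc ‖u x‖ ^ 2 ≤ 0 := h0
          _ ≤ kR := hkR0
      · -- main case : both positive
        set sD : ℝ := Real.sqrt Dsq with hsDdef
        set sB : ℝ := Real.sqrt Bsq with hsBdef
        have hsD0 : 0 < sD := Real.sqrt_pos.mpr hD
        have hsB0 : 0 < sB := Real.sqrt_pos.mpr hB
        have hsD2 : sD ^ 2 = Dsq := Real.sq_sqrt hDsq0
        have hsB2 : sB ^ 2 = Bsq := Real.sq_sqrt hBsq0
        clear_value sD sB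
        set τ : ℝ := sD / sB with hτdef
        have hτ0 : 0 < τ := div_pos hsD0 hsB0
        clear_value τ
        have h := master x τ hτ0
        set q : ℝ := Real.exp (-(τ * L)) with hqdef
        clear_value q
        have hq0 : 0 < q := by rw [hqdef]; positivity
        have hq1 : q < 1 := by
          rw [hqdef]; exact Real.exp_lt_one_iff.mpr (by nlinarith)
        set d' : ℝ := 1 - 2 * q * Real.cos β + q ^ 2 with hd'def
        clear_value d'
        have hd'0 : 0 < d' := by rw [hd'def]; nlinarith [sq_nonneg (1 - q), Real.cos_le_one β]
        have e : (Dsq + τ ^ 2 * Bsq) * ((1 - q ^ 2) / (2 * τ * d'))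
            = sD * sB * ((1 - q ^ 2) / d') := by
          rw [hτdef, ← hsD2, ← hsB2]
          field_simp
          ring
        rw [e] at h
        have hratio : (1 - q ^ 2) / d' ≤ kConst α := by
          have h2 := ratio_le_kConst α hαZ hq0 hq1
          rw [hd'def, hβdef]
          exact h2
        calc ‖u x‖ ^ 2 ≤ sD * sB * ((1 - q ^ 2) / d') := h
          _ ≤ sD * sB * kConst α := by
              apply mul_le_mul_of_nonneg_left hratio (by positivity)
          _ = kR := by rw [hkRdef, hsDdef, hsBdef]; ring
  -- endgame
  have hub : ∀ z : Set.Icc (0:ℝ) L, ‖u z.1‖ ≤ Real.sqrt kR :=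
    fun z => Real.le_sqrt_of_sq_le (hpt z.1)
  have hne : Nonempty (Set.Icc (0:ℝ) L) := ⟨⟨0, by constructor <;> [exact le_refl 0; exact hL.le]⟩⟩
  have hS : (⨆ x : Set.Icc (0:ℝ) L, ‖u x.1‖) ≤ Real.sqrt kR := ciSup_le hub
  have hS0 : 0 ≤ ⨆ x : Set.Icc (0:ℝ) L, ‖u x.1‖ := by
    have hbdd : BddAbove (Set.range fun x : Set.Icc (0:ℝ) L => ‖u x.1‖) := by
      refine ⟨Real.sqrt kR, ?_⟩
      rintro y ⟨z, rfl⟩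
      exact hub z
    exact le_trans (norm_nonneg _) (le_ciSup hbdd hne.some)
  calc (⨆ x : Set.Icc (0:ℝ) L, ‖u x.1‖) ^ 2 ≤ (Real.sqrt kR) ^ 2 :=
        pow_le_pow_left₀ hS0 hS 2
    _ = kR := Real.sq_sqrt hkR0

end MainTheorem
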